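/- For every integral connectivity structure 𝒦 on a finite nonempty set I, one has Γ_𝒦 = 𝒦; that is, a subset B ⊆ I belongs to 𝒦 if and only if every dissociation of B is contested by some member of 𝒦. -/

import Mathlib

universe u

variable {I : Type u}

/-- `{J₁, J₂}` is a dissociation of `J ⊆ I`: an (unordered) pair of nonempty
disjoint subsets whose union is `J`. -/
def IsDissociation (J J1 J2 : Set I) : Prop :=
  J1.Nonempty ∧ J2.Nonempty ∧ Disjoint J1 J2 ∧ J1 ∪ J2 = J

/-- `A` contests the dissociation `{J₁, J₂}`. -/
def Contests (A J1 J2 : Set I) : Prop :=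
  A ⊆ J1 ∪ J2 ∧ (A ∩ J1).Nonempty ∧ (A ∩ J2).Nonempty

/-- An integral connectivity structure on `I`. -/
def IsConnectivity (𝒦 : Set (Set I)) : Prop :=
  ∅ ∈ 𝒦 ∧ (∀ i : I, ({i} : Set I) ∈ 𝒦) ∧
    ∀ K L : Set I, K ∈ 𝒦 → L ∈ 𝒦 → (K ∩ L).Nonempty → K ∪ L ∈ 𝒦

/-- The integral connectivity structure generated by `𝒜`. -/
def generated (𝒜 : Set (Set I)) : Set (Set I) :=
  ⋂₀ {𝒦 : Set (Set I) | IsConnectivity 𝒦 ∧ 𝒜 ⊆ 𝒦}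

/-- The set `𝒦̃` of irreducible members of `𝒦` with at least two elements. -/
def irred (𝒦 : Set (Set I)) : Set (Set I) :=
  {K | K ∈ 𝒦 ∧ K ∉ generated (𝒦 \ {K}) ∧ 2 ≤ K.ncard}

/-- The sum of two integral connectivity structures: `𝒦₁ ⊕ 𝒦₂ = [𝒦₁ ∪ 𝒦₂]`. -/
def csum (𝒦₁ 𝒦₂ : Set (Set I)) : Set (Set I) := generated (𝒦₁ ∪ 𝒦₂)

/-- The discrete integral connectivity structure on `I`. -/
def discreteStructure (I : Type u) : Set (Set I) :=
  {(∅ : Set I)} ∪ {A : Set I | ∃ i : I, A = {i}}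

/-- `C` is a connected component of `(I, 𝒦)`: a maximal member of `𝒦`. -/
def IsComponent (𝒦 : Set (Set I)) (C : Set I) : Prop :=
  C ∈ 𝒦 ∧ ∀ K ∈ 𝒦, C ⊆ K → K = C

/-- `Γ_𝒜`: subsets of `I` all of whose dissociations are contested by a member of `𝒜`. -/
def Gamma (𝒜 : Set (Set I)) : Set (Set I) :=
  {B | ∀ J1 J2 : Set I, IsDissociation B J1 J2 → ∃ A ∈ 𝒜, Contests A J1 J2}

/-- A random family on `I`: a finite probability space together with finitely
valued random variables indexed by `I`. -/
structure RandomFamily (I : Type u) where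
  Ω : Type
  [fintΩ : Fintype Ω]
  P : Ω → ℝ
  P_nonneg : ∀ ω, 0 ≤ P ω
  P_total : ∑ ω, P ω = 1
  R : I → Type
  [fintR : ∀ i, Fintype (R i)]
  X : ∀ i, Ω → R i

attribute [instance] RandomFamily.fintΩ RandomFamily.fintR

/-- Probability of an event. -/
noncomputable def RandomFamily.prob (φ : RandomFamily I) (E : Set φ.Ω) : ℝ :=
  ∑ ω, E.indicator φ.P ω

/-- `P(X_J = x_J)`. -/
noncomputable def RandomFamily.probEq (φ : RandomFamily I) (J : Set I)
    (x : ∀ i, φ.R i) : ℝ :=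
  φ.prob {ω | ∀ j ∈ J, φ.X j ω = x j}

/-- `φ` respects the dissociation `{J₁, J₂}`:
`P(X_{J₁∪J₂} = x) = P(X_{J₁} = x) · P(X_{J₂} = x)` for all tuples of values. -/
def RandomFamily.Respects (φ : RandomFamily I) (J1 J2 : Set I) : Prop :=
  ∀ x : ∀ i, φ.R i, φ.probEq (J1 ∪ J2) x = φ.probEq J1 x * φ.probEq J2 x

/-- The connectivity structure `K_φ` of a random family: the subsets `J ⊆ I`
such that `φ` contests every dissociation of `J`. -/
def RandomFamily.Kconn (φ : RandomFamily I) : Set (Set I) :=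
  {J | ∀ J1 J2 : Set I, IsDissociation J J1 J2 → ¬ φ.Respects J1 J2}

/-- Tensor product of two random families. -/
noncomputable def RandomFamily.tensor (φ ψ : RandomFamily I) : RandomFamily I where
  Ω := φ.Ω × ψ.Ω
  fintΩ := inferInstance
  P := fun p => φ.P p.1 * ψ.P p.2
  P_nonneg := fun p => mul_nonneg (φ.P_nonneg _) (ψ.P_nonneg _)
  P_total := by
    rw [Fintype.sum_prod_type]
    simp only [← Finset.mul_sum]
    rw [ψ.P_total]
    simp only [mul_one]
    exact φ.P_total
  R := fun i => φ.R i × ψ.R i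
  fintR := fun i => inferInstance
  X := fun i p => (φ.X i p.1, ψ.X i p.2)

/-- Restriction of a random family to a subset `J ⊆ I`. -/
def RandomFamily.restrict (φ : RandomFamily I) (J : Set I) : RandomFamily J where
  Ω := φ.Ω
  fintΩ := inferInstance
  P := φ.P
  P_nonneg := φ.P_nonneg
  P_total := φ.P_total
  R := fun j => φ.R (j : I)
  fintR := fun j => inferInstance
  X := fun j => φ.X (j : I)

/-- The canonical `M`-brunnian family on `I`, for `M` of cardinality `m`
(with elements listed in increasing order). -/
noncomputable def brunnian [LinearOrder I] (M : Finset I) (m : ℕ) (h : M.card = m) :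
    RandomFamily I where
  Ω := Fin (m - 1) → ZMod 2
  fintΩ := inferInstance
  P := fun _ => ((2 : ℝ) ^ (m - 1))⁻¹
  P_nonneg := fun _ => by positivity
  P_total := by
    have hcard : Fintype.card (Fin (m - 1) → ZMod 2) = 2 ^ (m - 1) := by
      rw [Fintype.card_fun]
      simp
    rw [Finset.sum_const, Finset.card_univ, hcard, nsmul_eq_mul]
    push_cast
    exact mul_inv_cancel₀ (by positivity)
  R := fun _ => ZMod 2
  fintR := fun _ => inferInstance
  X := fun i ω =>
    if hi : i ∈ M then
      if hk : (((M.orderIsoOfFin h).symm ⟨i, hi⟩ : Fin m) : ℕ) < m - 1 then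
        ω ⟨_, hk⟩
      else ∑ j, ω j
    else 0
/-- for every integral connectivity structure `𝒦` on a finite nonempty
set, `Γ_𝒦 = 𝒦`: a subset `B` belongs to `𝒦` iff every dissociation of `B` is
contested by some member of `𝒦`. -/
lemma sUnion_mem_of_connectivity {I : Type u} {𝒦 : Set (Set I)}
    (h𝒦 : IsConnectivity 𝒦) (b : I) :
    ∀ (F : Set (Set I)), F.Finite → F ⊆ 𝒦 → (∀ K ∈ F, b ∈ K) → ⋃₀ F ∈ 𝒦 := by
  obtain ⟨hempty, _, hunion⟩ := h𝒦
  intro F hF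
  refine Set.Finite.induction_on (motive := fun F _ => F ⊆ 𝒦 → (∀ K ∈ F, b ∈ K) → ⋃₀ F ∈ 𝒦) F hF (fun _ _ => by simpa using hempty) ?_
  intro K F hKF hFfin ih hsub hb
  rw [Set.sUnion_insert]
  rcases F.eq_empty_or_nonempty with rfl | ⟨K', hK'⟩
  · simpa using hsub (Set.mem_insert _ _)
  · have hF𝒦 : ⋃₀ F ∈ 𝒦 := ih (fun L hL => hsub (Set.mem_insert_of_mem _ hL))
      (fun L hL => hb L (Set.mem_insert_of_mem _ hL))
    refine hunion _ _ (hsub (Set.mem_insert _ _)) hF𝒦 ⟨b, ?_, ?_⟩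
    · exact hb K (Set.mem_insert _ _)
    · exact ⟨K', hK', hb K' (Set.mem_insert_of_mem _ hK')⟩

theorem stmt3 {I : Type u} [Fintype I] [Nonempty I] (𝒦 : Set (Set I))
    (h𝒦 : IsConnectivity 𝒦) :
    Gamma 𝒦 = 𝒦 := by
  obtain ⟨hempty, hsingle, hunion⟩ := h𝒦
  apply subset_antisymm
  · intro B hB
    rcases B.eq_empty_or_nonempty with rfl | ⟨b, hb⟩
    · exact hempty
    · classical
      set F : Set (Set I) := {K | K ∈ 𝒦 ∧ K ⊆ B ∧ b ∈ K} with hFdef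
      have hFfin : F.Finite := Set.toFinite F
      have hC𝒦 : ⋃₀ F ∈ 𝒦 :=
        sUnion_mem_of_connectivity ⟨hempty, hsingle, hunion⟩ b F hFfin
          (fun K hK => hK.1) (fun K hK => hK.2.2)
      set C : Set I := ⋃₀ F with hCdef
      have hCB : C ⊆ B := by
        intro x hx
        obtain ⟨K, hK, hxK⟩ := hx
        exact hK.2.1 hxK
      have hbC : b ∈ C := ⟨{b}, ⟨hsingle b, by simpa using hb, rfl⟩, rfl⟩
      rcases eq_or_ne C B with hCeq | hCne
      · exact hCeq ▸ hC𝒦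
      · have hdiff : (B \ C).Nonempty := by
          rw [Set.diff_nonempty]
          intro hBC
          exact hCne (subset_antisymm hCB hBC)
        have hdis : IsDissociation B C (B \ C) :=
          ⟨⟨b, hbC⟩, hdiff, Set.disjoint_sdiff_right, Set.union_diff_cancel hCB⟩
        obtain ⟨A, hA𝒦, hAsub, hAC, hAD⟩ := hB C (B \ C) hdis
        have hAB : A ⊆ B := by
          rw [Set.union_diff_cancel hCB] at hAsub; exact hAsub
        have hAC𝒦 : A ∪ C ∈ 𝒦 := hunion A C hA𝒦 hC𝒦 hAC
        have hmem : A ∪ C ∈ F :=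
          ⟨hAC𝒦, Set.union_subset hAB hCB, Or.inr hbC⟩
        have hsub : A ∪ C ⊆ C := Set.subset_sUnion_of_mem hmem
        obtain ⟨x, hxA, hxB, hxC⟩ := hAD
        exact (hxC (hsub (Or.inl hxA))).elim
  · rintro B hB J1 J2 ⟨h1, h2, hd, hu⟩
    refine ⟨B, hB, le_of_eq hu.symm, ?_, ?_⟩
    · obtain ⟨x, hx⟩ := h1
      exact ⟨x, hu ▸ Or.inl hx, hx⟩
    · obtain ⟨x, hx⟩ := h2
      exact ⟨x, hu ▸ Or.inr hx, hx⟩
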